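/- Let D ∈ {0,1}ⁿ with exactly n/2 nonzero entries, and let v ∈ ℝⁿ be a unit vector with ⟨D/‖D‖₂, v⟩ ≥ 1 − α. Define D* ∈ {0,1}ⁿ by D*ᵢ = 1 iff √(n/2)·vᵢ ≥ 1/2. Then the Hamming distance between D* and D is at most (n/2)·6√α. -/
import Mathlib


open Finset

/-- **Rounding recovers the database.** With `D ∈ {0,1}ⁿ` having exactly `n/2` ones
and `v` a unit vector with `⟨D/‖D‖₂, v⟩ ≥ 1 − α`, defining `D*ᵢ = 1` iff
`√(n/2)·vᵢ ≥ 1/2`, the Hamming distance between `D*` and `D` is at most `(n/2)·6√α`. -/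
theorem rounding_hamming_bound
    (n : ℕ) (D : Fin n → ℝ) (hD01 : ∀ i, D i = 0 ∨ D i = 1)
    (hcard : 2 * (Finset.univ.filter fun i => D i = 1).card = n)
    (v : Fin n → ℝ) (hv : ∑ i, (v i) ^ 2 = 1)
    (α : ℝ) (hα0 : 0 ≤ α) (hα1 : α ≤ 1)
    (hcorr : ∑ i, (D i / Real.sqrt ((n : ℝ) / 2)) * v i ≥ 1 - α)
    (Dstar : Fin n → ℝ)
    (hDstar : ∀ i, Dstar i = if (1 : ℝ) / 2 ≤ Real.sqrt ((n : ℝ) / 2) * v i then 1 else 0) :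
    ((Finset.univ.filter fun i => Dstar i ≠ D i).card : ℝ)
      ≤ ((n : ℝ) / 2) * (6 * Real.sqrt α) := by
  rcases Nat.eq_zero_or_pos n with hn0 | hnpos
  · subst hn0
    simp [Finset.filter_eq_empty_iff]
  have hn : (0 : ℝ) < n := by exact_mod_cast hnpos
  set s : ℝ := Real.sqrt ((n : ℝ) / 2) with hs_def
  have hs2 : s ^ 2 = (n : ℝ) / 2 := Real.sq_sqrt (by positivity)
  have hs : 0 < s := Real.sqrt_pos.mpr (by positivity)
  have hsqα : 0 ≤ Real.sqrt α := Real.sqrt_nonneg α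
  -- sum of D equals n/2
  have hDsq : ∀ i, (D i) ^ 2 = D i := by
    intro i; rcases hD01 i with h | h <;> rw [h] <;> ring
  have hDsum : ∑ i, D i = (n : ℝ) / 2 := by
    rw [← Finset.sum_filter_add_sum_filter_not Finset.univ (fun i => D i = 1)]
    have h1 : ∑ i ∈ Finset.univ.filter (fun i => D i = 1), D i
        = ((Finset.univ.filter fun i => D i = 1).card : ℝ) := by
      rw [Finset.sum_congr rfl (fun i hi => (Finset.mem_filter.mp hi).2)]
      simp
    have h2 : ∑ i ∈ Finset.univ.filter (fun i => ¬ D i = 1), D i = 0 := by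
      apply Finset.sum_eq_zero
      intro i hi
      rcases hD01 i with h | h
      · exact h
      · exact absurd h (Finset.mem_filter.mp hi).2
    rw [h1, h2, add_zero]
    have : ((2 * (Finset.univ.filter fun i => D i = 1).card : ℕ) : ℝ) = (n : ℝ) := by
      exact_mod_cast congrArg (Nat.cast : ℕ → ℝ) hcard
    push_cast at this
    linarith
  -- correlation bound
  have hDv : ∑ i, D i * v i ≥ s * (1 - α) := by
    have h : ∑ i, (D i / s) * v i = (∑ i, D i * v i) / s := by
      rw [Finset.sum_div]
      exact Finset.sum_congr rfl (fun i _ => by ring)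
    rw [h] at hcorr
    calc s * (1 - α) ≤ s * ((∑ i, D i * v i) / s) :=
          mul_le_mul_of_nonneg_left hcorr hs.le
      _ = ∑ i, D i * v i := by field_simp
  -- sum of squares bound
  have key : ∑ i, (s * v i - D i) ^ 2 ≤ (n : ℝ) * α := by
    have expand : ∑ i, (s * v i - D i) ^ 2
        = s ^ 2 * (∑ i, (v i) ^ 2) - 2 * s * (∑ i, D i * v i) + ∑ i, (D i) ^ 2 := by
      rw [Finset.mul_sum, Finset.mul_sum, ← Finset.sum_sub_distrib, ← Finset.sum_add_distrib]
      exact Finset.sum_congr rfl (fun i _ => by ring)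
    rw [expand, hv, Finset.sum_congr rfl (fun i _ => hDsq i), hDsum, hs2]
    nlinarith [hDv, hs2, hs.le]
  -- Cauchy–Schwarz
  have habs : ∑ i, |s * v i - D i| ≤ (n : ℝ) * Real.sqrt α := by
    have cs := sq_sum_le_card_mul_sum_sq (s := Finset.univ)
      (f := fun i => |s * v i - D i|)
    have h3 : ∑ i, |s * v i - D i| ^ 2 = ∑ i, (s * v i - D i) ^ 2 :=
      Finset.sum_congr rfl (fun i _ => sq_abs _)
    rw [h3] at cs
    simp only [Finset.card_univ, Fintype.card_fin] at cs
    have hsq : (∑ i, |s * v i - D i|) ^ 2 ≤ ((n : ℝ) * Real.sqrt α) ^ 2 := by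
      calc (∑ i, |s * v i - D i|) ^ 2 ≤ (n : ℝ) * ∑ i, (s * v i - D i) ^ 2 := cs
        _ ≤ (n : ℝ) * ((n : ℝ) * α) := by gcongr
        _ = ((n : ℝ) * Real.sqrt α) ^ 2 := by
            rw [mul_pow, Real.sq_sqrt hα0]; ring
    have h4 : 0 ≤ ∑ i, |s * v i - D i| := Finset.sum_nonneg fun i _ => abs_nonneg _
    exact le_of_sq_le_sq hsq (by positivity)
  -- each mismatch contributes 1/2
  have hmis : ∀ i ∈ Finset.univ.filter (fun i => Dstar i ≠ D i),
      (1 : ℝ) / 2 ≤ |s * v i - D i| := by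
    intro i hi
    have hne := (Finset.mem_filter.mp hi).2
    rw [hDstar i] at hne
    rcases hD01 i with h | h
    · rw [h] at hne ⊢
      by_cases hc : (1 : ℝ) / 2 ≤ s * v i
      · rw [sub_zero, abs_of_nonneg (by linarith)]; linarith
      · simp only [hc, if_false] at hne; exact absurd rfl hne
    · rw [h] at hne ⊢
      by_cases hc : (1 : ℝ) / 2 ≤ s * v i
      · simp only [hc, if_true] at hne; exact absurd rfl hne
      · push_neg at hc
        rw [abs_of_nonpos (by linarith)]; linarith
  have hcardle : ((Finset.univ.filter fun i => Dstar i ≠ D i).card : ℝ) * (1 / 2)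
      ≤ ∑ i, |s * v i - D i| := by
    calc ((Finset.univ.filter fun i => Dstar i ≠ D i).card : ℝ) * (1 / 2)
        ≤ ∑ i ∈ Finset.univ.filter (fun i => Dstar i ≠ D i), |s * v i - D i| := by
          rw [mul_comm]
          exact Finset.card_nsmul_le_sum _ _ _ hmis |>.trans_eq' (by simp [nsmul_eq_mul, mul_comm])
      _ ≤ ∑ i, |s * v i - D i| :=
          Finset.sum_le_sum_of_subset_of_nonneg (Finset.filter_subset _ _)
            (fun i _ _ => abs_nonneg _)
  nlinarith [hcardle, habs, mul_nonneg (le_of_lt hn) hsqα]
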